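/- Assume (P_n) satisfies the three-term recurrence with coefficients A_n ∈ ℝ, r_n > 0, and assume there is a constant M with |P_n(x)| ≤ M for all n and all x in the support of μ. If (N_k) is a sequence of indices with r_{N_k + 1} → 0 as k → ∞, then for every ε > 0 and every x in the support of μ, lim_{k→∞} ∫_{{y : |y − x| ≥ ε}} |D_{N_k}(x,y)| dμ(y) = 0, where D_N(x,y) = Σ_{n=0}^{N} P_n(x)P_n(y). -/

import Mathlib

open MeasureTheory Polynomial Set Filter

/-- The (topological) support of a measure on ℝ. -/
def measSupport (μ : Measure ℝ) : Set ℝ := {x | ∀ U ∈ nhds x, 0 < μ U}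

lemma measSupport_compl_null (μ : Measure ℝ) : μ (measSupport μ)ᶜ = 0 := by
  set S : Set (Set ℝ) := {U | IsOpen U ∧ μ U = 0}
  obtain ⟨T, Tc, TS, hT⟩ := TopologicalSpace.isOpen_sUnion_countable S fun s hs => hs.1
  have hsub : (measSupport μ)ᶜ ⊆ ⋃₀ S := by
    intro x hx
    simp only [measSupport, mem_compl_iff, mem_setOf_eq, not_forall] at hx
    obtain ⟨U, hU, hμU⟩ := hx
    obtain ⟨V, hVU, hVopen, hxV⟩ := mem_nhds_iff.1 hU
    refine ⟨V, ⟨hVopen, le_antisymm ?_ zero_le⟩, hxV⟩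
    calc μ V ≤ μ U := measure_mono hVU
    _ = 0 := by simpa using hμU
  have : μ (⋃₀ S) = 0 := by
    rw [← hT]
    exact (measure_sUnion_null_iff Tc).2 fun s hs => (TS hs).2
  exact measure_mono_null hsub this

theorem dirichlet_kernel_localization (μ : Measure ℝ) [IsProbabilityMeasure μ]
    (hsupp : μ (Icc (0:ℝ) 1)ᶜ = 0) (hinf : (measSupport μ).Infinite)
    (P : ℕ → Polynomial ℝ)
    (hdeg : ∀ n, (P n).natDegree = n)
    (hlead : ∀ n, 0 < (P n).leadingCoeff)
    (horth : ∀ m n, ∫ x, (P m).eval x * (P n).eval x ∂μ = if m = n then 1 else 0)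
    (r A : ℕ → ℝ) (hr0 : r 0 = 0) (hr : ∀ n, 0 < r (n + 1))
    (hrec : ∀ (n : ℕ) (x : ℝ), x * (P n).eval x =
      r (n + 1) * (P (n + 1)).eval x + A n * (P n).eval x + r n * (P (n - 1)).eval x)
    (M : ℝ) (hbd : ∀ n : ℕ, ∀ x ∈ measSupport μ, |(P n).eval x| ≤ M)
    (Nk : ℕ → ℕ) (hNk : Tendsto (fun k => r (Nk k + 1)) atTop (nhds 0)) :
    ∀ ε > 0, ∀ x ∈ measSupport μ,
      Tendsto (fun k => ∫ y in {y : ℝ | ε ≤ |y - x|},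
          |∑ n ∈ Finset.range (Nk k + 1), (P n).eval x * (P n).eval y| ∂μ)
        atTop (nhds 0) := by
  -- Christoffel–Darboux formula
  have CD : ∀ (N : ℕ) (x y : ℝ),
      (x - y) * ∑ n ∈ Finset.range (N + 1), (P n).eval x * (P n).eval y =
      r (N + 1) * ((P (N + 1)).eval x * (P N).eval y -
        (P N).eval x * (P (N + 1)).eval y) := by
    intro N
    induction N with
    | zero =>
      intro x y
      have h1 := hrec 0 x
      have h2 := hrec 0 y
      rw [hr0] at h1 h2
      norm_num [Finset.sum_range_one]
      linear_combination (P 0).eval y * h1 - (P 0).eval x * h2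
    | succ N ih =>
      intro x y
      have h1 := hrec (N + 1) x
      have h2 := hrec (N + 1) y
      simp only [Nat.add_sub_cancel] at h1 h2
      rw [Finset.sum_range_succ, mul_add, ih x y]
      linear_combination (P (N + 1)).eval y * h1 - (P (N + 1)).eval x * h2
  intro ε hε x hx
  have hM0 : 0 ≤ M := le_trans (abs_nonneg _) (hbd 0 x hx)
  set s : Set ℝ := {y : ℝ | ε ≤ |y - x|} with hs
  have hsm : MeasurableSet s :=
    measurableSet_le measurable_const ((measurable_id.sub measurable_const).abs)
  -- pointwise bound on the support
  have key : ∀ k, ∫ y in s,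
      |∑ n ∈ Finset.range (Nk k + 1), (P n).eval x * (P n).eval y| ∂μ
      ≤ 2 * M ^ 2 / ε * r (Nk k + 1) := by
    intro k
    set N := Nk k
    set C := 2 * M ^ 2 / ε * r (N + 1) with hC
    have hC0 : 0 ≤ C := mul_nonneg (by positivity) (hr N).le
    have hae : ∀ᵐ y ∂(μ.restrict s),
        ‖|∑ n ∈ Finset.range (N + 1), (P n).eval x * (P n).eval y|‖ ≤ C := by
      have h1 : ∀ᵐ y ∂(μ.restrict s), y ∈ measSupport μ :=
        ae_mono Measure.restrict_le_self
          (ae_iff.2 (by exact measSupport_compl_null μ))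
      filter_upwards [h1, ae_restrict_mem hsm] with y hy hys
      have hxy : ε ≤ |y - x| := hys
      have hne : x - y ≠ 0 := by
        intro h
        have : y - x = 0 := by linarith [sub_eq_zero.1 h]
        rw [this, abs_zero] at hxy; linarith
      have hD := CD N x y
      have ha : 0 < |x - y| := lt_of_lt_of_le hε (by rwa [abs_sub_comm])
      have hprod : |x - y| * |∑ n ∈ Finset.range (N + 1), (P n).eval x * (P n).eval y| =
          r (N + 1) * |(P (N + 1)).eval x * (P N).eval y -
            (P N).eval x * (P (N + 1)).eval y| := by
        rw [← abs_mul, hD, abs_mul, abs_of_pos (hr N)]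
      have hnum : |(P (N + 1)).eval x * (P N).eval y -
          (P N).eval x * (P (N + 1)).eval y| ≤ 2 * M ^ 2 := by
        calc |(P (N + 1)).eval x * (P N).eval y - (P N).eval x * (P (N + 1)).eval y|
            ≤ |(P (N + 1)).eval x * (P N).eval y| + |(P N).eval x * (P (N + 1)).eval y| :=
              abs_sub _ _
          _ ≤ M * M + M * M := by
              rw [abs_mul, abs_mul]
              gcongr <;> [exact hbd _ x hx; exact hbd _ y hy; exact hbd _ x hx;
                exact hbd _ y hy]
          _ = 2 * M ^ 2 := by ring
      have hval : |∑ n ∈ Finset.range (N + 1), (P n).eval x * (P n).eval y| =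
          r (N + 1) * |(P (N + 1)).eval x * (P N).eval y -
            (P N).eval x * (P (N + 1)).eval y| / |x - y| := by
        rw [eq_div_iff ha.ne']
        linarith [hprod]
      rw [Real.norm_eq_abs, abs_abs, hval]
      calc r (N + 1) * |(P (N + 1)).eval x * (P N).eval y -
            (P N).eval x * (P (N + 1)).eval y| / |x - y|
          ≤ r (N + 1) * (2 * M ^ 2) / ε :=
            div_le_div₀ (mul_nonneg (hr N).le (by positivity))
              (mul_le_mul_of_nonneg_left hnum (hr N).le) hε (by rwa [abs_sub_comm])
        _ = C := by rw [hC]; ring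
    have := norm_integral_le_of_norm_le_const (μ := μ.restrict s) hae
    rw [Real.norm_eq_abs] at this
    have hle : |∫ y in s, |∑ n ∈ Finset.range (N + 1), (P n).eval x * (P n).eval y| ∂μ|
        ≤ C * ((μ.restrict s) univ).toReal := this
    have hmeas1 : ((μ.restrict s) univ).toReal ≤ 1 := by
      rw [Measure.restrict_apply_univ]
      have : μ s ≤ 1 := prob_le_one
      exact ENNReal.toReal_le_of_le_ofReal one_pos.le (by simpa using this)
    calc ∫ y in s, |∑ n ∈ Finset.range (N + 1), (P n).eval x * (P n).eval y| ∂μ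
        ≤ |∫ y in s, |∑ n ∈ Finset.range (N + 1), (P n).eval x * (P n).eval y| ∂μ| :=
          le_abs_self _
      _ ≤ C * ((μ.restrict s) univ).toReal := hle
      _ ≤ C * 1 := by gcongr
      _ = C := mul_one _
  have hnonneg : ∀ k, 0 ≤ ∫ y in s,
      |∑ n ∈ Finset.range (Nk k + 1), (P n).eval x * (P n).eval y| ∂μ :=
    fun k => integral_nonneg fun y => abs_nonneg _
  have hCk : Tendsto (fun k => 2 * M ^ 2 / ε * r (Nk k + 1)) atTop (nhds 0) := by
    simpa using hNk.const_mul (2 * M ^ 2 / ε)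
  exact squeeze_zero hnonneg key hCk
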